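/- Let m, k be positive natural numbers, let A_E be an invertible real m×m matrix, A_I an invertible real k×k matrix, α_E ∈ ℝ^m with Σ_j (α_E)_j = 1, α_I ∈ ℝ^k, and β ∈ ℝ. Set a_E = −A_E·𝟏_m (where 𝟏_m is the all-ones vector), and let V be the (m+k)×(m+k) block matrix with blocks: top-left −A_E, top-right −a_E α_Iᵀ (the rank-one outer product), bottom-left 0, bottom-right −A_I. Let α = (α_E, 0) ∈ ℝ^{m+k} and b = (0, β·𝟏_k) ∈ ℝ^{m+k}. Then V is invertible and α·V⁻¹·b = −β·( α_I·A_I⁻¹·𝟏_k ). -/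

import Mathlib

open Matrix

lemma vecMulVec_mulVec' {m k : ℕ} (w : Fin m → ℝ) (v : Fin k → ℝ) (x : Fin k → ℝ) :
    Matrix.vecMulVec w v *ᵥ x = (v ⬝ᵥ x) • w := by
  ext i
  simp [Matrix.vecMulVec, Matrix.mulVec, dotProduct, Finset.mul_sum, mul_assoc,
    mul_comm, mul_left_comm]

theorem stmt15 (m k : ℕ) (hm : 0 < m) (hk : 0 < k)
    (AE : Matrix (Fin m) (Fin m) ℝ) (hAE : IsUnit AE)
    (AI : Matrix (Fin k) (Fin k) ℝ) (hAI : IsUnit AI)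
    (αE : Fin m → ℝ) (hαE : ∑ j, αE j = 1)
    (αI : Fin k → ℝ) (β : ℝ)
    (aE : Fin m → ℝ) (haE : aE = -(AE *ᵥ fun _ => (1:ℝ)))
    (V : Matrix (Fin m ⊕ Fin k) (Fin m ⊕ Fin k) ℝ)
    (hV : V = Matrix.fromBlocks (-AE) (-(Matrix.vecMulVec aE αI)) 0 (-AI))
    (α b : Fin m ⊕ Fin k → ℝ)
    (hα : α = Sum.elim αE (fun _ => (0:ℝ)))
    (hb : b = Sum.elim (fun _ => (0:ℝ)) (fun _ => β)) :
    IsUnit V ∧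
    α ⬝ᵥ (V⁻¹ *ᵥ b) = -(β * (αI ⬝ᵥ (AI⁻¹ *ᵥ fun _ => (1:ℝ)))) := by
  have hdAE : IsUnit AE.det := (Matrix.isUnit_iff_isUnit_det AE).mp hAE
  have hdAI : IsUnit AI.det := (Matrix.isUnit_iff_isUnit_det AI).mp hAI
  have hAEi : AE * AE⁻¹ = 1 := Matrix.mul_nonsing_inv AE hdAE
  have hAEi' : AE⁻¹ * AE = 1 := Matrix.nonsing_inv_mul AE hdAE
  have hAIi : AI * AI⁻¹ = 1 := Matrix.mul_nonsing_inv AI hdAI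
  set A : Matrix (Fin m) (Fin m) ℝ := -AE with hA
  set D : Matrix (Fin k) (Fin k) ℝ := -AI with hD
  set B : Matrix (Fin m) (Fin k) ℝ := -(Matrix.vecMulVec aE αI) with hB
  have hAinv : A⁻¹ = -(AE⁻¹) := by
    apply Matrix.inv_eq_right_inv
    simp [hA, hAEi]
  have hDinv : D⁻¹ = -(AI⁻¹) := by
    apply Matrix.inv_eq_right_inv
    simp [hD, hAIi]
  set C : Matrix (Fin m) (Fin k) ℝ := -(A⁻¹ * B * D⁻¹) with hC
  set W := Matrix.fromBlocks A⁻¹ C 0 D⁻¹ with hW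
  have hABD : A * (A⁻¹ * B * D⁻¹) = B * D⁻¹ := by
    rw [← Matrix.mul_assoc, ← Matrix.mul_assoc, hAinv]
    simp [hA, hAEi]
  have h11 : A * A⁻¹ = 1 := by rw [hAinv]; simp [hA, hAEi]
  have h22 : D * D⁻¹ = 1 := by rw [hDinv]; simp [hD, hAIi]
  have h12 : A * C + B * D⁻¹ = 0 := by
    rw [hC, Matrix.mul_neg, hABD]; simp
  have hVW : V * W = 1 := by
    rw [hV, hW, Matrix.fromBlocks_multiply, ← Matrix.fromBlocks_one]
    simp only [Matrix.zero_mul, Matrix.mul_zero, add_zero, zero_add, h11, h22, h12]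
  have hVunit : IsUnit V := by
    rw [Matrix.isUnit_iff_isUnit_det]
    have := congrArg Matrix.det hVW
    rw [Matrix.det_mul, Matrix.det_one] at this
    exact isUnit_iff_exists_inv.mpr ⟨_, this⟩
  refine ⟨hVunit, ?_⟩
  have hVinv : V⁻¹ = W := Matrix.inv_eq_right_inv hVW
  rw [hVinv, hb, hW, Matrix.fromBlocks_mulVec, hα, sumElim_dotProduct_sumElim]
  have hCval : C = AE⁻¹ * Matrix.vecMulVec aE αI * AI⁻¹ := by
    rw [hC, hAinv, hDinv, hB]
    simp [Matrix.neg_mul, Matrix.mul_neg]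
  have hc : C *ᵥ (fun _ => β) = (αI ⬝ᵥ (AI⁻¹ *ᵥ fun _ => β)) • (AE⁻¹ *ᵥ aE) := by
    rw [hCval, ← Matrix.mulVec_mulVec, ← Matrix.mulVec_mulVec, vecMulVec_mulVec',
      Matrix.mulVec_smul]
  have haEinv : AE⁻¹ *ᵥ aE = -(fun _ => (1:ℝ)) := by
    rw [haE, Matrix.mulVec_neg, Matrix.mulVec_mulVec, hAEi', Matrix.one_mulVec]
  have hbβ : AI⁻¹ *ᵥ (fun _ => β) = β • (AI⁻¹ *ᵥ fun _ => (1:ℝ)) := by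
    have : (fun _ : Fin k => β) = β • (fun _ : Fin k => (1:ℝ)) := by
      funext i; simp
    rw [this, Matrix.mulVec_smul]
  have h0 : ∀ x, (A⁻¹ *ᵥ fun _ => (0:ℝ)) x = 0 := by
    intro x; simp [Matrix.mulVec, dotProduct]
  simp only [Sum.elim_comp_inl, Sum.elim_comp_inr, dotProduct, Pi.add_apply, h0,
    zero_add, hc, hbβ, haEinv, dotProduct_smul, smul_eq_mul, Pi.smul_apply,
    Pi.neg_apply, mul_neg, mul_one, zero_mul, Finset.sum_const_zero, add_zero,
    ← Finset.sum_neg_distrib]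
  rw [← Finset.sum_mul, hαE, one_mul]
  rw [Finset.mul_sum, ← Finset.sum_neg_distrib]
  exact Finset.sum_congr rfl fun i _ => by ring
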